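/- For every natural number k ≥ 1 and every vector x ∈ {0,1}^k, there exists exactly one positive integer n with 1 ≤ n ≤ 2^k such that x_i ≡ T^{(i)}(n) (mod 2) for all i with 0 ≤ i < k. Hence the map sending a residue class modulo 2^k to its length-k parity vector is a bijection between the 2^k residue classes modulo 2^k and the set {0,1}^k. -/
import Mathlib

/-- The Collatz map: `T n = (3n+1)/2` if `n` is odd, `n/2` if `n` is even. -/
def T (n : ℕ) : ℕ := if n % 2 = 1 then (3 * n + 1) / 2 else n / 2

lemma two_mul_T (n : ℕ) : 2 * T n = if n % 2 = 1 then 3 * n + 1 else n := by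
  unfold T
  split <;> rename_i h <;> omega

lemma back (j n m : ℕ) (h2 : n % 2 = m % 2) (h : T n ≡ T m [MOD 2^j]) :
    n ≡ m [MOD 2^(j+1)] := by
  have h' : 2 * T n ≡ 2 * T m [MOD 2^(j+1)] := by
    rw [pow_succ, mul_comm (2^j) 2]
    exact h.mul_left' (c := 2)
  rw [two_mul_T, two_mul_T] at h'
  rcases Nat.mod_two_eq_zero_or_one n with h0 | h0 <;>
    simp [h0, ← h2] at h' <;> [skip; skip]
  · simpa using h'
  · have h3 : 3 * n ≡ 3 * m [MOD 2^(j+1)] := Nat.ModEq.add_right_cancel' 1 h'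
    have hc : Nat.Coprime (2^(j+1)) 3 := Nat.Coprime.pow_left _ (by decide)
    exact h3.cancel_left_of_coprime hc

lemma modeq_of_parities : ∀ (k n m : ℕ),
    (∀ i < k, T^[i] n % 2 = T^[i] m % 2) → n ≡ m [MOD 2^k] := by
  intro k
  induction k with
  | zero => intro n m _; simp [Nat.ModEq, Nat.mod_one]
  | succ k ih =>
    intro n m h
    have h0 : n % 2 = m % 2 := by simpa using h 0 (by omega)
    have hT : T n ≡ T m [MOD 2^k] := by
      apply ih
      intro i hi
      have := h (i+1) (by omega)
      simpa [Function.iterate_succ_apply] using this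
    exact back k n m h0 hT

theorem stmt_2 (k : ℕ) (hk : 1 ≤ k) (x : Fin k → Fin 2) :
    ∃! n : ℕ, (1 ≤ n ∧ n ≤ 2 ^ k) ∧ ∀ i : Fin k, (x i : ℕ) = T^[(i : ℕ)] n % 2 := by
  -- uniqueness helper
  have huniq : ∀ n m : ℕ, 1 ≤ n → n ≤ 2^k → 1 ≤ m → m ≤ 2^k →
      (∀ i : Fin k, T^[(i:ℕ)] n % 2 = T^[(i:ℕ)] m % 2) → n = m := by
    intro n m h1 h2 h3 h4 h
    have : n ≡ m [MOD 2^k] := modeq_of_parities k n m (fun i hi => h ⟨i, hi⟩)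
    have hmod := this
    unfold Nat.ModEq at hmod
    rcases Nat.lt_or_ge n (2^k) with hn | hn <;> rcases Nat.lt_or_ge m (2^k) with hm | hm
    · rwa [Nat.mod_eq_of_lt hn, Nat.mod_eq_of_lt hm] at hmod
    · have : m = 2^k := le_antisymm h4 hm
      rw [Nat.mod_eq_of_lt hn, this, Nat.mod_self] at hmod; omega
    · have : n = 2^k := le_antisymm h2 hn
      rw [Nat.mod_eq_of_lt hm, this, Nat.mod_self] at hmod; omega
    · omega
  -- existence via counting
  let f : Fin (2^k) → (Fin k → Fin 2) := fun n i =>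
    ⟨T^[(i:ℕ)] ((n:ℕ)+1) % 2, Nat.mod_lt _ (by norm_num)⟩
  have hinj : Function.Injective f := by
    intro a b hab
    have ha' := a.isLt
    have hb' := b.isLt
    have : (a:ℕ)+1 = (b:ℕ)+1 := by
      apply huniq _ _ (by omega) (by omega) (by omega) (by omega)
      intro i
      exact congrArg Fin.val (congrFun hab i)
    exact Fin.ext (by omega)
  have hbij : Function.Bijective f := by
    rw [Fintype.bijective_iff_injective_and_card]
    refine ⟨hinj, ?_⟩
    simp [Fintype.card_fun]
  obtain ⟨a, ha⟩ := hbij.surjective x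
  have ha' := a.isLt
  refine ⟨(a:ℕ)+1, ⟨⟨by omega, by omega⟩, ?_⟩, ?_⟩
  · intro i
    have := congrFun ha i
    have := congrArg Fin.val this
    simpa [f] using this.symm
  · rintro m ⟨⟨hm1, hm2⟩, hm⟩
    apply huniq m ((a:ℕ)+1) hm1 hm2 (by omega) (by omega)
    intro i
    have h1 := hm i
    have h2 := congrArg Fin.val (congrFun ha i)
    simp [f] at h2
    omega
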